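/- Suppose N is even. For every Λ̃ ∈ Λ_Q, every u ∈ ℝ^N, and every 0 ≤ i ≤ n−1: r_i = Σ_{k=0}^{N−1} cos(ϖik)·|V_k|², where V = Λ̃W̃u; that is, every pair (Λ̃W̃, S̃(1/2)) with Λ̃ ∈ Λ_Q is an embedding of the quadratic map f (note S̃(1/2)_{i,k} = cos(ϖik)). -/

import Mathlib

open scoped BigOperators
open Complex Matrix

noncomputable section

/-- Circular autocovariance: `r i = ∑ t, u t * u ((t - i) mod N)`. -/
def autocov (N n : ℕ) (u : Fin N → ℝ) : Fin n → ℝ :=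
  fun i => ∑ t : Fin N, u t * u ⟨(t.val + (N - i.val)) % N, Nat.mod_lt _ t.pos⟩

/-- The DFT matrix `W̃` with entries `N^{-1/2} e^{-j ϖ k t}`, `ϖ = 2π/N`. -/
def dft (N : ℕ) : Matrix (Fin N) (Fin N) ℂ := fun k t =>
  (Real.sqrt N : ℂ)⁻¹ * Complex.exp (-(Complex.I * (2 * Real.pi / N) * k.val * t.val))

/-- The matrix `S̃` with entries `e^{j ϖ i k}`. -/
def Stilde (N n : ℕ) : Matrix (Fin n) (Fin N) ℂ := fun i k =>
  Complex.exp (Complex.I * (2 * Real.pi / N) * i.val * k.val)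

/-- The matrix `S̃(γ)` with entries `γ e^{-j ϖ i k} + (1-γ) e^{j ϖ i k}`. -/
def StildeG (N n : ℕ) (γ : ℂ) : Matrix (Fin n) (Fin N) ℂ := fun i k =>
  γ * Complex.exp (-(Complex.I * (2 * Real.pi / N) * i.val * k.val)) +
    (1 - γ) * Complex.exp (Complex.I * (2 * Real.pi / N) * i.val * k.val)

/-- The real matrix `S` with entries `cos(ϖ i k)`. -/
def Smat (N n : ℕ) : Matrix (Fin n) (Fin N) ℝ := fun i k =>
  Real.cos (2 * Real.pi / N * i.val * k.val)

/-- `ξ_m = (1, cos(mϖ), …, cos((N-1)mϖ))`. -/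
def xi (N m : ℕ) : Fin N → ℝ := fun t => Real.cos (t.val * m * (2 * Real.pi / N))

/-- `ζ_m = (0, sin(mϖ), …, sin((N-1)mϖ))`. -/
def zeta (N m : ℕ) : Fin N → ℝ := fun t => Real.sin (t.val * m * (2 * Real.pi / N))

/-- The orthogonal matrix `W` whose columns are
`√(2/N)·[ξ_0/√2, ξ_1, …, ξ_{N/2-1}, ξ_{N/2}/√2, ζ_{N/2-1}, …, ζ_1]` for even `N` and
`√(2/N)·[ξ_0/√2, ξ_1, …, ξ_{(N-1)/2}, ζ_{(N-1)/2}, …, ζ_1]` for odd `N`. -/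
def Wmat (N : ℕ) : Matrix (Fin N) (Fin N) ℝ := fun t c =>
  Real.sqrt (2 / N) *
    (if 2 * c.val ≤ N then
      (if c.val = 0 ∨ 2 * c.val = N then (Real.sqrt 2)⁻¹ else 1) * xi N c.val t
    else zeta N (N - c.val) t)

/-- The cyclic shift (unit delay) matrix: `A t s = 1` iff `t ≡ s + 1 (mod N)`. -/
def shiftA (N : ℕ) : Matrix (Fin N) (Fin N) ℝ := fun t s =>
  if (s.val + 1) % N = t.val then 1 else 0

/-- The set `X̃(r)` of real vectors `x` with `S̃ x = r`, nonnegative entries,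
and the symmetry `x_k = x_{N-k}` for `1 ≤ k ≤ N-1`. -/
def Xset (N n : ℕ) (r : Fin n → ℝ) : Set (Fin N → ℝ) :=
  {x | (Stilde N n).mulVec (fun k => (x k : ℂ)) = (fun i => (r i : ℂ)) ∧
    (∀ k, 0 ≤ x k) ∧
    (∀ k : Fin N, ∀ hk : 1 ≤ k.val, x k = x ⟨N - k.val, Nat.sub_lt k.pos hk⟩)}

/-- The set `ℱ = {f(u) : uᵀu = C}` of attainable autocovariances. -/
def Fset (N n : ℕ) (C : ℝ) : Set (Fin n → ℝ) :=
  {r | ∃ u : Fin N → ℝ, (∑ t, u t * u t) = C ∧ autocov N n u = r}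

/-- Membership in the family `Λ_Q` (for even `N`): diagonal entries `1` at positions `0`
and `N/2`, arbitrary `2×2` unitary blocks at index pairs `{i, N-i}` for `1 ≤ i ≤ N/2-1`,
and all other entries zero. -/
def memLamQ {N : ℕ} (L : Matrix (Fin N) (Fin N) ℂ) : Prop :=
  (∀ a : Fin N, a.val = 0 → L a a = 1) ∧
  (∀ a : Fin N, 2 * a.val = N → L a a = 1) ∧
  (∀ a b : Fin N, 1 ≤ a.val → 2 * a.val < N → a.val + b.val = N →
    (!![L a a, L a b; L b a, L b b]ᴴ * !![L a a, L a b; L b a, L b b] = 1 ∧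
      !![L a a, L a b; L b a, L b b] * !![L a a, L a b; L b a, L b b]ᴴ = 1)) ∧
  (∀ a b : Fin N, ¬(a = b ∨ a.val + b.val = N) → L a b = 0)


section Aux

lemma expsum (N : ℕ) (hN : 0 < N) (m : ℤ) :
    ∑ k : Fin N, Complex.exp (Complex.I * (2*Real.pi/N) * m * k) =
      if (N:ℤ) ∣ m then (N:ℂ) else 0 := by
  have hN0 : (N:ℂ) ≠ 0 := Nat.cast_ne_zero.2 hN.ne'
  have hpi : (Real.pi : ℂ) ≠ 0 := by exact_mod_cast Real.pi_ne_zero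
  have hterm : ∀ k : Fin N, Complex.exp (Complex.I * (2*Real.pi/N) * m * k) =
      (Complex.exp (Complex.I * (2*Real.pi/N) * m)) ^ (k:ℕ) := by
    intro k
    rw [← Complex.exp_nat_mul]
    ring_nf
  simp only [hterm]
  rw [Fin.sum_univ_eq_sum_range (fun k => (Complex.exp (Complex.I * (2*Real.pi/N) * m)) ^ k)]
  by_cases hd : (N:ℤ) ∣ m
  · obtain ⟨c, hc⟩ := hd
    have h1 : Complex.exp (Complex.I * (2*Real.pi/N) * m) = 1 := by
      have heq : (Complex.I * (2*Real.pi/N) * m) = (c:ℤ) * (2 * Real.pi * Complex.I) := by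
        rw [hc]; push_cast; field_simp
      rw [heq, Complex.exp_int_mul_two_pi_mul_I]
    rw [if_pos ⟨c, hc⟩]
    simp [h1]
  · have hne : Complex.exp (Complex.I * (2*Real.pi/N) * m) ≠ 1 := by
      intro h
      obtain ⟨c, hc⟩ := Complex.exp_eq_one_iff.1 h
      apply hd
      have hnz : (2 * (Real.pi:ℂ) * Complex.I) ≠ 0 := by
        simp [Real.pi_ne_zero, Complex.I_ne_zero, hpi]
      have h3 : (2 * (Real.pi:ℂ) * Complex.I) * (m:ℂ) =
          (2 * (Real.pi:ℂ) * Complex.I) * (c * N) := by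
        field_simp at hc
        linear_combination (2 * (Real.pi:ℂ) * Complex.I) * hc
      have h4 : (m:ℂ) = c * N := mul_left_cancel₀ hnz h3
      exact ⟨c, by exact_mod_cast h4.trans (mul_comm _ _)⟩
    have hpow : (Complex.exp (Complex.I * (2*Real.pi/N) * m)) ^ N = 1 := by
      rw [← Complex.exp_nat_mul]
      have heq : (N:ℂ) * (Complex.I * (2*Real.pi/N) * m) = (m:ℤ) * (2 * Real.pi * Complex.I) := by
        push_cast; field_simp
      rw [heq, Complex.exp_int_mul_two_pi_mul_I]
    rw [geom_sum_eq hne, hpow]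
    simp [hd]

lemma pick (N : ℕ) (hN : 0 < N) (v : Fin N → ℂ) (a : ℕ) :
    ∑ s : Fin N, v s * (if (N:ℤ) ∣ ((s:ℤ) - a) then (N:ℂ) else 0) =
      N * v ⟨a % N, Nat.mod_lt _ hN⟩ := by
  set s₀ : Fin N := ⟨a % N, Nat.mod_lt _ hN⟩ with hs₀
  have hcast : ((s₀ : Fin N) : ℤ) = (a:ℤ) % (N:ℤ) := by
    simp [hs₀, Int.natCast_mod]
  rw [Finset.sum_eq_single_of_mem s₀ (Finset.mem_univ _)]
  · have hdvd : (N:ℤ) ∣ ((s₀:ℤ) - a) := by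
      rw [hcast]
      exact Int.dvd_emod_sub_self
    rw [if_pos hdvd]; ring
  · intro s _ hne
    rw [if_neg, mul_zero]
    intro h
    apply hne
    have h1 : (a:ℤ) % N = (s:ℤ) % N := Int.modEq_iff_dvd.2 h
    have h2 : ((s:ℤ)) % N = (s:ℤ) := Int.emod_eq_of_lt (by positivity) (by exact_mod_cast s.isLt)
    apply Fin.ext
    have h3 : ((s:ℤ)) = ((s₀:ℤ)) := by rw [hcast, h1, h2]
    exact_mod_cast h3

lemma reindex (N : ℕ) (hN : 0 < N) (u : Fin N → ℝ) (i : ℕ) (hi : i < N) :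
    ∑ t : Fin N, u t * u ⟨(t.val + i) % N, Nat.mod_lt _ hN⟩ =
      ∑ t : Fin N, u t * u ⟨(t.val + (N - i)) % N, Nat.mod_lt _ hN⟩ := by
  have hmod : ∀ a b : ℕ, ((a % N) + b) % N = (a + b) % N := fun a b => Nat.mod_add_mod a N b
  let e : Fin N ≃ Fin N :=
    { toFun := fun t => ⟨(t.val + i) % N, Nat.mod_lt _ hN⟩
      invFun := fun t => ⟨(t.val + (N - i)) % N, Nat.mod_lt _ hN⟩
      left_inv := by
        intro t; apply Fin.ext
        simp only [hmod]
        have h1 : t.val + i + (N - i) = t.val + N := by omega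
        rw [h1, Nat.add_mod_right, Nat.mod_eq_of_lt t.isLt]
      right_inv := by
        intro t; apply Fin.ext
        simp only [hmod]
        have h1 : t.val + (N - i) + i = t.val + N := by omega
        rw [h1, Nat.add_mod_right, Nat.mod_eq_of_lt t.isLt] }
  calc ∑ t : Fin N, u t * u ⟨(t.val + i) % N, Nat.mod_lt _ hN⟩
      = ∑ t : Fin N, u (e.symm t) * u t := by
        rw [← Equiv.sum_comp e (fun t => u (e.symm t) * u t)]
        refine Finset.sum_congr rfl fun x _ => ?_
        rw [Equiv.symm_apply_apply]
        rfl
    _ = ∑ t : Fin N, u t * u ⟨(t.val + (N - i)) % N, Nat.mod_lt _ hN⟩ := by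
        apply Finset.sum_congr rfl
        intro t _
        rw [mul_comm]
        rfl

lemma dft_autocov (N : ℕ) (hN : 0 < N) (u : Fin N → ℝ) (i : ℕ) (hi : i < N) :
    ((∑ t : Fin N, u t * u ⟨(t.val + (N - i)) % N, Nat.mod_lt _ hN⟩ : ℝ) : ℂ) =
      ∑ k : Fin N, (Real.cos (2 * Real.pi / N * i * k.val) : ℂ) *
        (((dft N).mulVec fun t => (u t : ℂ)) k *
          (starRingEnd ℂ) (((dft N).mulVec fun t => (u t : ℂ)) k)) := by
  have hN0 : (N:ℂ) ≠ 0 := Nat.cast_ne_zero.2 hN.ne'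
  set U : Fin N → ℂ := (dft N).mulVec fun t => (u t : ℂ) with hUdef
  have hU : ∀ k : Fin N, U k = ((Real.sqrt N : ℝ) : ℂ)⁻¹ *
      ∑ t : Fin N, (u t : ℂ) * Complex.exp (-(Complex.I * (2 * Real.pi / N) * k * t)) := by
    intro k
    rw [hUdef]
    simp only [Matrix.mulVec, dotProduct, dft, Finset.mul_sum]
    exact Finset.sum_congr rfl fun t _ => by ring
  have hUc : ∀ k : Fin N, (starRingEnd ℂ) (U k) = ((Real.sqrt N : ℝ) : ℂ)⁻¹ *
      ∑ s : Fin N, (u s : ℂ) * Complex.exp (Complex.I * (2 * Real.pi / N) * k * s) := by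
    intro k
    rw [hU k, _root_.map_mul, map_sum]
    congr 1
    · rw [← Complex.ofReal_inv, Complex.conj_ofReal]
    · refine Finset.sum_congr rfl fun s _ => ?_
      rw [_root_.map_mul, Complex.conj_ofReal, ← Complex.exp_conj]
      congr 1
      simp only [map_neg, _root_.map_mul, map_div₀, Complex.conj_I, Complex.conj_ofReal, map_ofNat,
        map_natCast]
      ring
  have hsqrt : ((Real.sqrt N : ℝ) : ℂ)⁻¹ * ((Real.sqrt N : ℝ) : ℂ)⁻¹ = (N:ℂ)⁻¹ := by
    rw [← mul_inv, ← Complex.ofReal_mul, Real.mul_self_sqrt (Nat.cast_nonneg N)]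
    push_cast
    ring
  have hprod : ∀ k : Fin N, U k * (starRingEnd ℂ) (U k) =
      (N:ℂ)⁻¹ * ∑ t : Fin N, ∑ s : Fin N, ((u t : ℂ) * (u s : ℂ)) *
        (Complex.exp (-(Complex.I * (2 * Real.pi / N) * k * t)) *
          Complex.exp (Complex.I * (2 * Real.pi / N) * k * s)) := by
    intro k
    rw [hUc k, hU k, mul_mul_mul_comm, hsqrt, Finset.sum_mul_sum]
    simp only [Finset.mul_sum]
    exact Finset.sum_congr rfl fun t _ => Finset.sum_congr rfl fun s _ => by ring
  have key : ∀ t s : Fin N,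
      ∑ k : Fin N, (Real.cos (2 * Real.pi / N * i * k.val) : ℂ) *
        (Complex.exp (-(Complex.I * (2 * Real.pi / N) * k * t)) *
          Complex.exp (Complex.I * (2 * Real.pi / N) * k * s)) =
      (1/2 : ℂ) * ((if (N:ℤ) ∣ ((s:ℤ) - ((t.val + (N - i) : ℕ) : ℤ)) then (N:ℂ) else 0)
        + (if (N:ℤ) ∣ ((s:ℤ) - ((t.val + i : ℕ) : ℤ)) then (N:ℂ) else 0)) := by
    intro t s
    have hterm : ∀ k : Fin N,
        (Real.cos (2 * Real.pi / N * i * k.val) : ℂ) *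
          (Complex.exp (-(Complex.I * (2 * Real.pi / N) * k * t)) *
            Complex.exp (Complex.I * (2 * Real.pi / N) * k * s)) =
        (1/2 : ℂ) * (Complex.exp (Complex.I * (2*Real.pi/N) * (((i:ℤ) + s - t : ℤ) : ℂ) * k)
          + Complex.exp (Complex.I * (2*Real.pi/N) * (((s:ℤ) - t - i : ℤ) : ℂ) * k)) := by
      intro k
      have e1 : Complex.exp (Complex.I * (2*Real.pi/N) * (((i:ℤ) + s - t : ℤ) : ℂ) * k) =
          Complex.exp (((2 * Real.pi / N * i * k.val : ℝ) : ℂ) * Complex.I) *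
            (Complex.exp (-(Complex.I * (2 * Real.pi / N) * k * t)) *
              Complex.exp (Complex.I * (2 * Real.pi / N) * k * s)) := by
        rw [← Complex.exp_add, ← Complex.exp_add]
        congr 1
        push_cast
        ring
      have e2 : Complex.exp (Complex.I * (2*Real.pi/N) * (((s:ℤ) - t - i : ℤ) : ℂ) * k) =
          Complex.exp (-((2 * Real.pi / N * i * k.val : ℝ) : ℂ) * Complex.I) *
            (Complex.exp (-(Complex.I * (2 * Real.pi / N) * k * t)) *
              Complex.exp (Complex.I * (2 * Real.pi / N) * k * s)) := by
        rw [← Complex.exp_add, ← Complex.exp_add]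
        congr 1
        push_cast
        ring
      rw [Complex.ofReal_cos, Complex.cos, e1, e2]
      ring
    simp only [hterm]
    rw [← Finset.mul_sum, Finset.sum_add_distrib]
    rw [expsum N hN ((i:ℤ) + s - t), expsum N hN ((s:ℤ) - t - i)]
    have h1 : ((N:ℤ) ∣ ((i:ℤ) + s - t)) ↔ ((N:ℤ) ∣ ((s:ℤ) - ((t.val + (N - i) : ℕ) : ℤ))) := by
      have hcast : ((t.val + (N - i) : ℕ) : ℤ) = (t:ℤ) + N - i := by
        push_cast [Nat.cast_sub hi.le]; ring
      rw [hcast]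
      constructor
      · intro h
        have harg : ((s:ℤ) - ((t:ℤ) + N - i)) = ((i:ℤ) + s - t) + (-1) * N := by ring
        rw [harg]
        exact dvd_add h ⟨-1, by ring⟩
      · intro h
        have harg : ((i:ℤ) + s - t) = ((s:ℤ) - ((t:ℤ) + N - i)) + N := by ring
        rw [harg]
        exact dvd_add h ⟨1, by ring⟩
    have h2 : ((N:ℤ) ∣ ((s:ℤ) - t - i)) ↔ ((N:ℤ) ∣ ((s:ℤ) - ((t.val + i : ℕ) : ℤ))) := by
      have hcast : ((t.val + i : ℕ) : ℤ) = (t:ℤ) + i := by push_cast; ring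
      rw [hcast, sub_add_eq_sub_sub]
    rw [if_congr h1 rfl rfl, if_congr h2 rfl rfl]
  -- assemble
  calc ((∑ t : Fin N, u t * u ⟨(t.val + (N - i)) % N, Nat.mod_lt _ hN⟩ : ℝ) : ℂ)
      = ∑ t : Fin N, (1/2 : ℂ) * ((u t : ℂ) * (u ⟨(t.val + (N - i)) % N, Nat.mod_lt _ hN⟩ : ℂ)
          + (u t : ℂ) * (u ⟨(t.val + i) % N, Nat.mod_lt _ hN⟩ : ℂ)) := by
        have hre := reindex N hN u i hi
        push_cast
        rw [← Finset.mul_sum, Finset.sum_add_distrib]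
        rw [show (∑ t : Fin N, (u t : ℂ) * (u ⟨(t.val + i) % N, Nat.mod_lt _ hN⟩ : ℂ)) =
            ((∑ t : Fin N, u t * u ⟨(t.val + i) % N, Nat.mod_lt _ hN⟩ : ℝ) : ℂ) by push_cast; rfl]
        rw [hre]
        push_cast
        ring
    _ = ∑ t : Fin N, ∑ s : Fin N, (N:ℂ)⁻¹ * (((u t : ℂ) * (u s : ℂ)) *
          ((1/2 : ℂ) * ((if (N:ℤ) ∣ ((s:ℤ) - ((t.val + (N - i) : ℕ) : ℤ)) then (N:ℂ) else 0)
            + (if (N:ℤ) ∣ ((s:ℤ) - ((t.val + i : ℕ) : ℤ)) then (N:ℂ) else 0)))) := by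
        refine Finset.sum_congr rfl fun t _ => ?_
        have p1 := pick N hN (fun s => (u s : ℂ)) (t.val + (N - i))
        have p2 := pick N hN (fun s => (u s : ℂ)) (t.val + i)
        have expand : ∑ s : Fin N, (N:ℂ)⁻¹ * (((u t : ℂ) * (u s : ℂ)) *
            ((1/2 : ℂ) * ((if (N:ℤ) ∣ ((s:ℤ) - ((t.val + (N - i) : ℕ) : ℤ)) then (N:ℂ) else 0)
              + (if (N:ℤ) ∣ ((s:ℤ) - ((t.val + i : ℕ) : ℤ)) then (N:ℂ) else 0)))) =
            (N:ℂ)⁻¹ * (u t : ℂ) * (1/2 : ℂ) *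
              ((∑ s : Fin N, (u s : ℂ) * (if (N:ℤ) ∣ ((s:ℤ) - ((t.val + (N - i) : ℕ) : ℤ)) then (N:ℂ) else 0))
              + (∑ s : Fin N, (u s : ℂ) * (if (N:ℤ) ∣ ((s:ℤ) - ((t.val + i : ℕ) : ℤ)) then (N:ℂ) else 0))) := by
          rw [mul_add, Finset.mul_sum, Finset.mul_sum, ← Finset.sum_add_distrib]
          refine Finset.sum_congr rfl fun s _ => by ring
        rw [expand, p1, p2]
        field_simp
    _ = ∑ t : Fin N, ∑ s : Fin N, (N:ℂ)⁻¹ * (((u t : ℂ) * (u s : ℂ)) *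
          (∑ k : Fin N, (Real.cos (2 * Real.pi / N * i * k.val) : ℂ) *
            (Complex.exp (-(Complex.I * (2 * Real.pi / N) * k * t)) *
              Complex.exp (Complex.I * (2 * Real.pi / N) * k * s)))) := by
        refine Finset.sum_congr rfl fun t _ => Finset.sum_congr rfl fun s _ => ?_
        rw [key t s]
    _ = ∑ k : Fin N, (Real.cos (2 * Real.pi / N * i * k.val) : ℂ) *
        (U k * (starRingEnd ℂ) (U k)) := by
        have hR : ∑ k : Fin N, (Real.cos (2 * Real.pi / N * i * k.val) : ℂ) *
            (U k * (starRingEnd ℂ) (U k)) =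
            ∑ t : Fin N, ∑ s : Fin N, ∑ k : Fin N,
              (N:ℂ)⁻¹ * (((u t : ℂ) * (u s : ℂ)) *
                ((Real.cos (2 * Real.pi / N * i * k.val) : ℂ) *
                  (Complex.exp (-(Complex.I * (2 * Real.pi / N) * k * t)) *
                    Complex.exp (Complex.I * (2 * Real.pi / N) * k * s)))) :=
          calc ∑ k : Fin N, (Real.cos (2 * Real.pi / N * i * k.val) : ℂ) *
              (U k * (starRingEnd ℂ) (U k))
              = ∑ k : Fin N, ∑ t : Fin N, ∑ s : Fin N,
                (N:ℂ)⁻¹ * (((u t : ℂ) * (u s : ℂ)) *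
                  ((Real.cos (2 * Real.pi / N * i * k.val) : ℂ) *
                    (Complex.exp (-(Complex.I * (2 * Real.pi / N) * k * t)) *
                      Complex.exp (Complex.I * (2 * Real.pi / N) * k * s)))) := by
                refine Finset.sum_congr rfl fun k _ => ?_
                rw [hprod k]
                simp only [Finset.mul_sum]
                exact Finset.sum_congr rfl fun t _ => Finset.sum_congr rfl fun s _ => by ring
            _ = ∑ t : Fin N, ∑ k : Fin N, ∑ s : Fin N,
                (N:ℂ)⁻¹ * (((u t : ℂ) * (u s : ℂ)) *
                  ((Real.cos (2 * Real.pi / N * i * k.val) : ℂ) *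
                    (Complex.exp (-(Complex.I * (2 * Real.pi / N) * k * t)) *
                      Complex.exp (Complex.I * (2 * Real.pi / N) * k * s)))) := Finset.sum_comm
            _ = ∑ t : Fin N, ∑ s : Fin N, ∑ k : Fin N,
                (N:ℂ)⁻¹ * (((u t : ℂ) * (u s : ℂ)) *
                  ((Real.cos (2 * Real.pi / N * i * k.val) : ℂ) *
                    (Complex.exp (-(Complex.I * (2 * Real.pi / N) * k * t)) *
                      Complex.exp (Complex.I * (2 * Real.pi / N) * k * s)))) :=
                Finset.sum_congr rfl fun t _ => Finset.sum_comm
        rw [hR]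
        refine Finset.sum_congr rfl fun t _ => Finset.sum_congr rfl fun s _ => ?_
        simp only [Finset.mul_sum]


section Pairing
variable {N : ℕ}

/-- the involution k ↦ N - k (mod N) -/
def sig (N : ℕ) : Fin N → Fin N := fun k => ⟨(N - k.val) % N, Nat.mod_lt _ k.pos⟩

lemma sig_val_zero (k : Fin N) (h : k.val = 0) : sig N k = k := by
  apply Fin.ext
  simp [sig, h]

lemma sig_val_pos (k : Fin N) (h : 1 ≤ k.val) : (sig N k).val = N - k.val := by
  have : N - k.val < N := by omega
  simp [sig, Nat.mod_eq_of_lt this]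

lemma sig_invol : Function.Involutive (sig N) := by
  intro k
  rcases Nat.eq_zero_or_pos k.val with h | h
  · rw [sig_val_zero k h, sig_val_zero k h]
  · have h1 := sig_val_pos k h
    have h2 : 1 ≤ (sig N k).val := by have := k.isLt; omega
    apply Fin.ext
    rw [sig_val_pos _ h2, h1]
    have := k.isLt; omega

/-- V pair-norm preservation -/
lemma pair_norm (L : Matrix (Fin N) (Fin N) ℂ) (hL : memLamQ L) (U : Fin N → ℂ)
    (k : Fin N) :
    L.mulVec U k * (starRingEnd ℂ) (L.mulVec U k) +
      L.mulVec U (sig N k) * (starRingEnd ℂ) (L.mulVec U (sig N k)) =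
    U k * (starRingEnd ℂ) (U k) + U (sig N k) * (starRingEnd ℂ) (U (sig N k)) := by
  obtain ⟨h0, hhalf, hQ, hz⟩ := hL
  -- case k = 0 or 2k = N : sig k = k and V k = U k
  have fixed : ∀ m : Fin N, L m m = 1 → sig N m = m → _root_.True := fun _ _ _ => trivial
  have diag : ∀ m : Fin N, L m m = 1 → (∀ b : Fin N, b ≠ m → L m b = 0) →
      L.mulVec U m = U m := by
    intro m hm hzero
    rw [Matrix.mulVec, dotProduct, Finset.sum_eq_single m
      (fun b _ hb => by rw [hzero b hb, zero_mul]) (fun h => absurd (Finset.mem_univ m) h)]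
    rw [hm, one_mul]
  rcases Nat.eq_zero_or_pos k.val with hk0 | hk1
  · -- k = 0
    have hs := sig_val_zero k hk0
    have hVk : L.mulVec U k = U k := by
      apply diag k (h0 k hk0)
      intro b hb
      apply hz
      rintro (h | h)
      · exact hb h.symm
      · exact absurd h (by have := b.isLt; omega)
    rw [hs, hVk]
  rcases eq_or_ne (2 * k.val) N with hkN | hkN
  · -- 2k = N
    have hs : sig N k = k := by
      apply Fin.ext
      rw [sig_val_pos k hk1]
      omega
    have hVk : L.mulVec U k = U k := by
      apply diag k (hhalf k hkN)
      intro b hb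
      apply hz
      rintro (h | h)
      · exact hb h.symm
      · apply hb
        apply Fin.ext
        omega
    rw [hs, hVk]
  · -- generic pair
    -- wlog: let a be the small one
    suffices H : ∀ a b : Fin N, 1 ≤ a.val → 2 * a.val < N → a.val + b.val = N →
        L.mulVec U a * (starRingEnd ℂ) (L.mulVec U a) +
          L.mulVec U b * (starRingEnd ℂ) (L.mulVec U b) =
        U a * (starRingEnd ℂ) (U a) + U b * (starRingEnd ℂ) (U b) by
      have hsv := sig_val_pos k hk1
      have hkN' : k.val < N := k.isLt
      rcases lt_or_gt_of_ne hkN with hlt | hgt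
      · have : k.val + (sig N k).val = N := by omega
        exact H k (sig N k) hk1 hlt this
      · have h1 : 1 ≤ (sig N k).val := by omega
        have h2 : 2 * (sig N k).val < N := by omega
        have h3 : (sig N k).val + k.val = N := by omega
        have := H (sig N k) k h1 h2 h3
        linear_combination this
    intro a b ha1 ha2 hab
    have hane : a ≠ b := by
      intro h
      rw [h] at ha2
      omega
    have hQa := (hQ a b ha1 ha2 hab).1
    -- entries of unitarity
    have h00 := congr_fun (congr_fun hQa 0) 0
    have h01 := congr_fun (congr_fun hQa 0) 1
    have h11 := congr_fun (congr_fun hQa 1) 1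
    simp only [Matrix.mul_apply, Fin.sum_univ_two, Matrix.conjTranspose_apply,
      Matrix.one_apply, Matrix.cons_val', Matrix.cons_val_zero, Matrix.cons_val_one,
      Matrix.head_cons, Matrix.head_fin_const, Matrix.empty_val', Matrix.cons_val_fin_one,
      RCLike.star_def, if_true, if_false, Fin.zero_eq_one_iff, Fin.one_eq_zero_iff] at h00 h01 h11
    -- reduce mulVec to two terms
    have hVa : L.mulVec U a = L a a * U a + L a b * U b := by
      rw [Matrix.mulVec, dotProduct,
        Finset.sum_eq_add_of_mem a b (Finset.mem_univ a) (Finset.mem_univ b) hane]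
      intro c _ hc
      rw [hz a c, zero_mul]
      rintro (h | h)
      · exact hc.1 h.symm
      · exact hc.2 (Fin.ext (by omega))
    have hVb : L.mulVec U b = L b a * U a + L b b * U b := by
      rw [Matrix.mulVec, dotProduct,
        Finset.sum_eq_add_of_mem a b (Finset.mem_univ a) (Finset.mem_univ b) hane]
      intro c _ hc
      rw [hz b c, zero_mul]
      rintro (h | h)
      · exact hc.2 h.symm
      · exact hc.1 (Fin.ext (by omega))
    rw [hVa, hVb]
    simp only [map_add, _root_.map_mul]
    have hc01' : (starRingEnd ℂ) (L a a) * (L a b) + (starRingEnd ℂ) (L b a) * (L b b) = 0 := by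
      simpa using h01
    have hc01'' : (starRingEnd ℂ) (L a b) * (L a a) + (starRingEnd ℂ) (L b b) * (L b a) = 0 := by
      have := congrArg (starRingEnd ℂ) hc01'
      simpa [map_add, _root_.map_mul, mul_comm] using this
    have h00' : (starRingEnd ℂ) (L a a) * (L a a) + (starRingEnd ℂ) (L b a) * (L b a) = 1 := by
      simpa using h00
    have h11' : (starRingEnd ℂ) (L a b) * (L a b) + (starRingEnd ℂ) (L b b) * (L b b) = 1 := by
      simpa using h11
    linear_combination (U a * (starRingEnd ℂ) (U a)) * h00' +
      (U b * (starRingEnd ℂ) (U b)) * h11' +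
      (U a * (starRingEnd ℂ) (U b)) * hc01'' +
      (U b * (starRingEnd ℂ) (U a)) * hc01'
end Pairing


lemma pair_sum {N : ℕ} (L : Matrix (Fin N) (Fin N) ℂ) (hL : memLamQ L) (U : Fin N → ℂ)
    (c : Fin N → ℝ) (hc : ∀ k : Fin N, c (sig N k) = c k) :
    ∑ k : Fin N, (c k : ℂ) * (L.mulVec U k * (starRingEnd ℂ) (L.mulVec U k)) =
      ∑ k : Fin N, (c k : ℂ) * (U k * (starRingEnd ℂ) (U k)) := by
  set V := L.mulVec U with hVdef
  apply mul_left_cancel₀ (two_ne_zero : (2:ℂ) ≠ 0)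
  have hswap : ∀ (W : Fin N → ℂ), ∑ k : Fin N, (c k : ℂ) * (W k * (starRingEnd ℂ) (W k)) =
      ∑ k : Fin N, (c (sig N k) : ℂ) * (W (sig N k) * (starRingEnd ℂ) (W (sig N k))) := by
    intro W
    exact (Equiv.sum_comp (Function.Involutive.toPerm (sig N) sig_invol)
      (fun k => (c k : ℂ) * (W k * (starRingEnd ℂ) (W k)))).symm
  calc (2:ℂ) * ∑ k : Fin N, (c k : ℂ) * (V k * (starRingEnd ℂ) (V k))
      = ∑ k : Fin N, ((c k : ℂ) * (V k * (starRingEnd ℂ) (V k))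
          + (c (sig N k) : ℂ) * (V (sig N k) * (starRingEnd ℂ) (V (sig N k)))) := by
        rw [two_mul, Finset.sum_add_distrib]
        congr 1
        exact hswap V
    _ = ∑ k : Fin N, ((c k : ℂ) * (U k * (starRingEnd ℂ) (U k))
          + (c (sig N k) : ℂ) * (U (sig N k) * (starRingEnd ℂ) (U (sig N k)))) := by
        refine Finset.sum_congr rfl fun k _ => ?_
        rw [hc k, ← mul_add, ← mul_add, hVdef, pair_norm L hL U k]
    _ = (2:ℂ) * ∑ k : Fin N, (c k : ℂ) * (U k * (starRingEnd ℂ) (U k)) := by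
        rw [two_mul, Finset.sum_add_distrib]
        congr 1
        exact (hswap U).symm

lemma cos_sig {N : ℕ} (i : ℕ) (k : Fin N) :
    Real.cos (2 * Real.pi / N * i * ((sig N k).val)) =
      Real.cos (2 * Real.pi / N * i * k.val) := by
  rcases Nat.eq_zero_or_pos k.val with h | h
  · rw [sig_val_zero k h]
  · have hN0 : (N:ℝ) ≠ 0 := by
      have := k.pos
      positivity
    rw [sig_val_pos k h]
    have hNk : ((N - k.val : ℕ) : ℝ) = (N:ℝ) - k.val := by
      push_cast [Nat.cast_sub k.isLt.le]
      ring
    rw [hNk]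
    have harg : 2 * Real.pi / N * i * ((N:ℝ) - k.val) =
        (i:ℝ) * (2 * Real.pi) - 2 * Real.pi / N * i * k.val := by
      field_simp
    rw [harg, Real.cos_nat_mul_two_pi_sub]

end Aux

/-- for even `N`, every `Λ̃ ∈ Λ_Q`, every `u ∈ ℝ^N`, and every
`0 ≤ i ≤ n-1`: `r_i = ∑_k cos(ϖik) |V_k|²` with `V = Λ̃ W̃ u`; that is, every pair
`(Λ̃W̃, S̃(1/2))` with `Λ̃ ∈ Λ_Q` is an embedding of `f`. -/
theorem stmt12 (N n : ℕ) (hn : 1 ≤ n) (hNn : n ≤ N) (hN : Even N)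
    (L : Matrix (Fin N) (Fin N) ℂ) (hL : memLamQ L) (u : Fin N → ℝ)
    (V : Fin N → ℂ) (hV : V = L.mulVec ((dft N).mulVec fun t => (u t : ℂ))) :
    ∀ i : Fin n, (autocov N n u i : ℂ) =
      ∑ k : Fin N, (Real.cos (2 * Real.pi / N * i.val * k.val) : ℂ) *
        (‖V k‖ : ℂ) ^ 2 := by
  intro i
  have hN0 : 0 < N := lt_of_lt_of_le hn hNn
  have hiN : i.val < N := lt_of_lt_of_le i.isLt hNn
  have habs : ∀ z : ℂ, ((‖z‖ : ℝ) : ℂ) ^ 2 = z * (starRingEnd ℂ) z := by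
    intro z
    rw [← Complex.ofReal_pow, Complex.sq_norm]
    exact (Complex.mul_conj z).symm
  subst hV
  calc (autocov N n u i : ℂ)
      = ∑ k : Fin N, (Real.cos (2 * Real.pi / N * i.val * k.val) : ℂ) *
          (((dft N).mulVec fun t => (u t : ℂ)) k *
            (starRingEnd ℂ) (((dft N).mulVec fun t => (u t : ℂ)) k)) := by
        simpa [autocov] using dft_autocov N hN0 u i.val hiN
    _ = ∑ k : Fin N, (Real.cos (2 * Real.pi / N * i.val * k.val) : ℂ) *
          (L.mulVec ((dft N).mulVec fun t => (u t : ℂ)) k *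
            (starRingEnd ℂ) (L.mulVec ((dft N).mulVec fun t => (u t : ℂ)) k)) := by
        exact (pair_sum L hL ((dft N).mulVec fun t => (u t : ℂ))
          (fun k => Real.cos (2 * Real.pi / N * i.val * k.val))
          (fun k => cos_sig i.val k)).symm
    _ = ∑ k : Fin N, (Real.cos (2 * Real.pi / N * i.val * k.val) : ℂ) *
          (‖L.mulVec ((dft N).mulVec fun t => (u t : ℂ)) k‖ : ℂ) ^ 2 := by
        refine Finset.sum_congr rfl fun k _ => ?_
        rw [habs]
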